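/- arXiv:1706.01294 — 4 statements merged into one kernel-verified Lean document; each statement's English description precedes it below -/
import Mathlib

section
/- Let (R,(π)) be a local principal ideal domain that is not a field, with residue field F = R/(π), let M be a finitely generated free R-module and φ an R-module endomorphism of M. For i ≥ 0 set M_i = {m ∈ M | φ(m) ∈ π^i M}, let M̄_i denote the image of M_i in M̄ = M/πM, and let e_i = dim_F(M̄_i/M̄_{i+1}) (the multiplicity of π^i as an elementary divisor of φ). Let d = Σ_{i≥0} i·e_i (the π-adic valuation of the product of the nonzero elementary divisors of φ). Suppose there are indices 0 < a_1 < a_2 < … < a_h and integers b_1 > b_2 > … > b_h such that (1) dim_F M̄_{a_j} ≥ b_j for j = 1,…,h, and (2) Σ_{j=1}^{h} (b_j − b_{j+1}) a_j = d, where b_{h+1} = dim_F of the image of Ker(φ) in M̄. Then: (i) e_{a_j} = b_j − b_{j+1} for j = 1,…,h; (ii) e_0 = dim_F M̄ − b_1; (iii) e_i = 0 for every i not in {0, a_1, …, a_h}. -/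
open scoped TensorProduct

private lemma telescope_sum (B : ℕ → ℤ) (m n : ℕ) (hmn : m ≤ n + 1) :
    ∑ j ∈ Finset.Icc m n, (B j - B (j + 1)) = B m - B (n + 1) := by
  rw [← Finset.Ico_add_one_right_eq_Icc, Finset.sum_Ico_eq_sum_range]
  have h2 := Finset.sum_range_sub' (fun k => B (m + k)) (n + 1 - m)
  simp only [← Nat.add_assoc] at h2
  have h3 : n.succ - m = n + 1 - m := rfl
  rw [h2]
  have h4 : m + (n + 1 - m) = n + 1 := by omega
  rw [Nat.add_zero, h4]

private lemma abel_sum (f : ℕ → ℤ) (n : ℕ) :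
    ∑ i ∈ Finset.range (n + 1), (i : ℤ) * (f i - f (i + 1)) =
      ∑ i ∈ Finset.Icc 1 n, f i - n * f (n + 1) := by
  induction n with
  | zero => simp
  | succ n ih =>
    rw [Finset.sum_range_succ, ih, Finset.sum_Icc_succ_top (by omega : 1 ≤ n + 1)]
    push_cast
    ring

private lemma comb_lemma (f : ℕ → ℤ) (k₀ : ℤ) (N : ℕ)
    (hanti : ∀ i j : ℕ, i ≤ j → f j ≤ f i)
    (hge : ∀ i, k₀ ≤ f i)
    (hstab : ∀ i, N ≤ i → f i = k₀)
    (h : ℕ) (hh : 1 ≤ h)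
    (a : ℕ → ℕ) (b : ℕ → ℤ)
    (ha1 : 0 < a 1)
    (hamono : ∀ j, 1 ≤ j → j < h → a j < a (j + 1))
    (hbtop : b (h + 1) = k₀)
    (hlb : ∀ j, 1 ≤ j → j ≤ h → b j ≤ f (a j))
    (haN : a h < N)
    (hsum : ∑ j ∈ Finset.Icc 1 h, (b j - b (j + 1)) * (a j : ℤ) =
      ∑ i ∈ Finset.Icc 1 N, (f i - k₀)) :
    (∀ j, 1 ≤ j → j ≤ h → f (a j) - f (a j + 1) = b j - b (j + 1)) ∧
    f 1 = b 1 ∧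
    (∀ i, i ≠ 0 → (∀ j, 1 ≤ j → j ≤ h → i ≠ a j) → f i = f (i + 1)) := by
  -- strict monotonicity of a on [1,h]
  have hastrict : ∀ j j', 1 ≤ j → j < j' → j' ≤ h → a j < a j' := by
    intro j j' h1 hjj'
    induction j', hjj' using Nat.le_induction with
    | base => intro hj'h; exact hamono j h1 (by omega)
    | succ n hn ih =>
      intro hnh
      exact (ih (by omega)).trans (hamono n (by omega) (by omega))
  have hamono' : ∀ j j', 1 ≤ j → j ≤ j' → j' ≤ h → a j ≤ a j' := by
    intro j j' h1 hle hh'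
    rcases eq_or_lt_of_le hle with rfl | hlt
    · exact le_rfl
    · exact (hastrict j j' h1 hlt hh').le
  -- the index function J
  have hP : ∀ i : ℕ, ∃ j, (1 ≤ j ∧ j ≤ h ∧ i ≤ a j) ∨ j = h + 1 :=
    fun i => ⟨h + 1, Or.inr rfl⟩
  set J : ℕ → ℕ := fun i => Nat.find (hP i) with hJdef
  have hJspec : ∀ i, (1 ≤ J i ∧ J i ≤ h ∧ i ≤ a (J i)) ∨ J i = h + 1 :=
    fun i => Nat.find_spec (hP i)
  have hJle : ∀ i, J i ≤ h + 1 := fun i => Nat.find_le (Or.inr rfl)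
  have hJ1 : ∀ i, 1 ≤ J i := by
    intro i
    rcases hJspec i with ⟨h1, _, _⟩ | hq
    · exact h1
    · omega
  have hJub : ∀ i j, 1 ≤ j → j ≤ h → i ≤ a j → J i ≤ j :=
    fun i j h1 h2 h3 => Nat.find_le (Or.inl ⟨h1, h2, h3⟩)
  have hiff : ∀ i j, 1 ≤ j → j ≤ h → (J i ≤ j ↔ i ≤ a j) := by
    intro i j h1 h2
    constructor
    · intro hJj
      rcases hJspec i with ⟨g1, g2, g3⟩ | hq
      · exact g3.trans (hamono' (J i) j g1 hJj h2)
      · omega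
    · exact hJub i j h1 h2
  -- claim 1 : pointwise bound
  have claim1 : ∀ i, b (J i) ≤ f i := by
    intro i
    rcases hJspec i with ⟨g1, g2, g3⟩ | hq
    · exact (hlb _ g1 g2).trans (hanti i (a (J i)) g3)
    · rw [hq, hbtop]; exact hge i
  -- claim 2 : telescoping description of b (J i)
  have hfilter : ∀ i, (Finset.Icc 1 h).filter (fun j => i ≤ a j) = Finset.Icc (J i) h := by
    intro i
    ext j
    simp only [Finset.mem_filter, Finset.mem_Icc]
    constructor
    · rintro ⟨⟨h1, h2⟩, h3⟩; exact ⟨hJub i j h1 h2 h3, h2⟩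
    · rintro ⟨h1, h2⟩
      have hj1 : 1 ≤ j := le_trans (hJ1 i) h1
      exact ⟨⟨hj1, h2⟩, (hiff i j hj1 h2).mp h1⟩
  have claim2 : ∀ i, b (J i) - k₀ =
      ∑ j ∈ Finset.Icc 1 h, (if i ≤ a j then b j - b (j + 1) else 0) := by
    intro i
    rw [← Finset.sum_filter, hfilter i, telescope_sum b (J i) h (hJle i), hbtop]
  -- claim 3 : sum identity
  have hsum2 : ∑ i ∈ Finset.Icc 1 N, (b (J i) - k₀) = ∑ i ∈ Finset.Icc 1 N, (f i - k₀) := by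
    rw [← hsum]
    calc ∑ i ∈ Finset.Icc 1 N, (b (J i) - k₀)
        = ∑ i ∈ Finset.Icc 1 N, ∑ j ∈ Finset.Icc 1 h,
            (if i ≤ a j then b j - b (j + 1) else 0) :=
          Finset.sum_congr rfl fun i _ => claim2 i
      _ = ∑ j ∈ Finset.Icc 1 h, ∑ i ∈ Finset.Icc 1 N,
            (if i ≤ a j then b j - b (j + 1) else 0) := Finset.sum_comm
      _ = ∑ j ∈ Finset.Icc 1 h, (b j - b (j + 1)) * (a j : ℤ) := by
          refine Finset.sum_congr rfl ?_
          intro j hj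
          simp only [Finset.mem_Icc] at hj
          have haj : a j ≤ N := le_of_lt (lt_of_le_of_lt (hamono' j h hj.1 hj.2 le_rfl) haN)
          rw [← Finset.sum_filter]
          have hfil : (Finset.Icc 1 N).filter (fun i => i ≤ a j) = Finset.Icc 1 (a j) := by
            ext i; simp only [Finset.mem_filter, Finset.mem_Icc]; omega
          rw [hfil, Finset.sum_const, Nat.card_Icc, Nat.add_sub_cancel, nsmul_eq_mul,
            mul_comm]
  have hpoint : ∀ i ∈ Finset.Icc 1 N, b (J i) - k₀ = f i - k₀ := by
    intro i hi
    have hle : ∀ i ∈ Finset.Icc 1 N, b (J i) - k₀ ≤ f i - k₀ :=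
      fun i _ => sub_le_sub_right (claim1 i) k₀
    exact (Finset.sum_eq_sum_iff_of_le hle).mp hsum2 i hi
  -- f i = b (J i) for all i ≥ 1
  have hfJ : ∀ i, 1 ≤ i → f i = b (J i) := by
    intro i hi
    by_cases hiN : i ≤ N
    · have := hpoint i (Finset.mem_Icc.mpr ⟨hi, hiN⟩)
      linarith
    · have hJi : J i = h + 1 := by
        rcases hJspec i with ⟨g1, g2, g3⟩ | hq
        · exfalso
          have : a (J i) ≤ a h := hamono' _ h g1 g2 le_rfl
          omega
        · exact hq
      rw [hJi, hbtop, hstab i (by omega)]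
  -- values of J at special points
  have hJa : ∀ j, 1 ≤ j → j ≤ h → J (a j) = j := by
    intro j h1 h2
    refine le_antisymm (hJub _ j h1 h2 le_rfl) ?_
    by_contra hc
    push_neg at hc
    rcases hJspec (a j) with ⟨g1, g2, g3⟩ | hq
    · exact absurd g3 (not_le.mpr (hastrict _ j g1 hc h2))
    · omega
  have hJa1 : ∀ j, 1 ≤ j → j ≤ h → J (a j + 1) = j + 1 := by
    intro j h1 h2
    refine le_antisymm ?_ ?_
    · rcases eq_or_lt_of_le h2 with he | hlt
      · rw [he]; exact hJle _
      · exact hJub _ (j + 1) (by omega) (by omega) (hamono j h1 hlt)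
    · refine Nat.succ_le_of_lt ?_
      refine (Nat.lt_find_iff (hP (a j + 1)) j).mpr ?_
      intro m hm hPm
      rcases hPm with ⟨m1, m2, m3⟩ | hq
      · have : a m ≤ a j := hamono' m j m1 (le_trans hm (le_refl j)) h2
        omega
      · omega
  have hJ1eq : J 1 = 1 := le_antisymm (hJub 1 1 le_rfl hh ha1) (hJ1 1)
  have hJmonoi : ∀ i, J i ≤ J (i + 1) := by
    intro i
    rcases hJspec (i + 1) with ⟨g1, g2, g3⟩ | hq
    · exact hJub i (J (i + 1)) g1 g2 (le_trans (by omega) g3)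
    · rw [hq]; exact hJle i
  have hJeqsucc : ∀ i, 1 ≤ i → (∀ j, 1 ≤ j → j ≤ h → i ≠ a j) → J (i + 1) = J i := by
    intro i hi hne
    rcases hJspec i with ⟨g1, g2, g3⟩ | hq
    · have hlt : i + 1 ≤ a (J i) :=
        Nat.succ_le_of_lt (lt_of_le_of_ne g3 (hne _ g1 g2))
      exact le_antisymm (hJub (i + 1) (J i) g1 g2 hlt) (hJmonoi i)
    · exact le_antisymm (hq ▸ hJle (i + 1)) (hJmonoi i)
  refine ⟨?_, ?_, ?_⟩
  · intro j h1 h2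
    have ha1j : 1 ≤ a j := le_trans ha1 (hamono' 1 j le_rfl h1 h2)
    rw [hfJ (a j) ha1j, hfJ (a j + 1) (by omega), hJa j h1 h2, hJa1 j h1 h2]
  · rw [hfJ 1 le_rfl, hJ1eq]
  · intro i hi0 hne
    have hi : 1 ≤ i := by omega
    rw [hfJ i hi, hfJ (i + 1) (by omega), hJeqsucc i hi hne]

/-- Key elementary-divisor lemma: let `(R,(π))` be a local PID which is not a field, with
residue field `F`, `M` a finitely generated free `R`-module and `φ` an `R`-endomorphism of
`M`.  Let `M_i = φ⁻¹(π^i M)`, let `S i = M̄_i` be the image of `M_i` in `M̄ = M/πM ≅ F ⊗ M`,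
let `e i = dim_F (M̄_i / M̄_{i+1})` (the multiplicity of `π^i` as an elementary divisor of
`φ`) and `d = ∑ i·e_i`.  Given indices `0 < a_1 < ⋯ < a_h` and bounds `b_1 > ⋯ > b_h` with
`dim_F M̄_{a_j} ≥ b_j` and `∑_{j=1}^h (b_j − b_{j+1}) a_j = d`, where `b_{h+1}` is the
dimension of the image of `ker φ` in `M̄`, one has `e_{a_j} = b_j − b_{j+1}`,
`e_0 = dim_F M̄ − b_1`, and `e_i = 0` for `i ∉ {0, a_1, …, a_h}`. -/
theorem elementary_divisor_multiplicities_lemma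
    (R : Type) [CommRing R] [IsDomain R] [IsPrincipalIdealRing R] [IsLocalRing R]
    (hR : ¬ IsField R)
    (π : R) (hπ : IsLocalRing.maximalIdeal R = Ideal.span {π})
    (M : Type) [AddCommGroup M] [Module R M] [Module.Free R M] [Module.Finite R M]
    (φ : M →ₗ[R] M)
    (S : ℕ → Submodule (IsLocalRing.ResidueField R) (IsLocalRing.ResidueField R ⊗[R] M))
    (hS : ∀ i, S i = Submodule.span (IsLocalRing.ResidueField R)
      (⇑(TensorProduct.mk R (IsLocalRing.ResidueField R) M 1) ''
        ↑(Submodule.comap φ (Ideal.span {π ^ i} • (⊤ : Submodule R M)))))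
    (e : ℕ → ℕ)
    (he : ∀ i, e i = Module.finrank (IsLocalRing.ResidueField R)
      (@HasQuotient.Quotient _ _ (@Submodule.hasQuotient _ _ _ (S i).addCommGroup _)
        (Submodule.comap (S i).subtype (S (i + 1)))))
    (d : ℕ) (hd : d = ∑' i, i * e i)
    (k₀ : ℕ)
    (hk₀ : k₀ = Module.finrank (IsLocalRing.ResidueField R)
      ↥(Submodule.span (IsLocalRing.ResidueField R)
        (⇑(TensorProduct.mk R (IsLocalRing.ResidueField R) M 1) '' ↑(LinearMap.ker φ))))
    (h : ℕ) (hh : 1 ≤ h)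
    (a b : ℕ → ℕ)
    (ha1 : 0 < a 1)
    (hamono : ∀ j, 1 ≤ j → j < h → a j < a (j + 1))
    (hbmono : ∀ j, 1 ≤ j → j < h → b (j + 1) < b j)
    (hbtop : b (h + 1) = k₀)
    (hlb : ∀ j, 1 ≤ j → j ≤ h →
      b j ≤ Module.finrank (IsLocalRing.ResidueField R) ↥(S (a j)))
    (hsum : ∑ j ∈ Finset.Icc 1 h, ((b j : ℤ) - (b (j + 1) : ℤ)) * (a j : ℤ) = (d : ℤ)) :
    (∀ j, 1 ≤ j → j ≤ h → (e (a j) : ℤ) = (b j : ℤ) - (b (j + 1) : ℤ)) ∧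
    ((e 0 : ℤ) =
      (Module.finrank (IsLocalRing.ResidueField R) (IsLocalRing.ResidueField R ⊗[R] M) : ℤ)
        - (b 1 : ℤ)) ∧
    (∀ i, i ≠ 0 → (∀ j, 1 ≤ j → j ≤ h → i ≠ a j) → e i = 0) := by
  classical
  set F := IsLocalRing.ResidueField R with hF
  set K : Submodule F (F ⊗[R] M) :=
    Submodule.span F (⇑(TensorProduct.mk R F M 1) '' ↑(LinearMap.ker φ)) with hKdef
  -- monotonicity of the chain S
  have hmonoS : ∀ i, S (i + 1) ≤ S i := by
    intro i
    rw [hS i, hS (i + 1)]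
    refine Submodule.span_mono (Set.image_mono (SetLike.coe_subset_coe.mpr ?_))
    exact Submodule.comap_mono (Submodule.smul_mono_left
      (Ideal.span_singleton_le_span_singleton.mpr (pow_dvd_pow π i.le_succ)))
  -- K is contained in every S i
  have hKS : ∀ i, K ≤ S i := by
    intro i
    rw [hS i, hKdef]
    refine Submodule.span_mono (Set.image_mono ?_)
    intro x hx
    have hx0 : φ x = 0 := hx
    show x ∈ Submodule.comap φ _
    rw [Submodule.mem_comap, hx0]
    exact Submodule.zero_mem _
  -- elements of (π) • ⊤ die in the residue tensor
  have hmk0 : ∀ z ∈ (Ideal.span {π} : Ideal R) • (⊤ : Submodule R M),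
      TensorProduct.mk R F M 1 z = 0 := by
    intro z hz
    refine Submodule.smul_induction_on hz ?_ ?_
    · intro r hr n _
      have hrm : r ∈ IsLocalRing.maximalIdeal R := by rw [hπ]; exact hr
      have hr0 : algebraMap R (IsLocalRing.ResidueField R) r = 0 := by
        rw [IsLocalRing.ResidueField.algebraMap_eq]
        exact Ideal.Quotient.eq_zero_iff_mem.mpr hrm
      have hsm : r • ((TensorProduct.mk R F M 1) n)
          = algebraMap R F r • ((TensorProduct.mk R F M 1) n) :=
        (algebraMap_smul F r _).symm
      rw [map_smul, hsm, hr0, zero_smul]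
    · intro x y hx hy
      rw [map_add, hx, hy, add_zero]
  -- S 0 is everything
  have hS0 : S 0 = ⊤ := by
    rw [hS 0, eq_top_iff]
    rintro t -
    induction t using TensorProduct.induction_on with
    | zero => exact Submodule.zero_mem _
    | tmul x m =>
        have hx : x ⊗ₜ[R] m = x • ((TensorProduct.mk R F M 1) m) := by
          simp [TensorProduct.smul_tmul']
        rw [hx]
        refine Submodule.smul_mem _ _ (Submodule.subset_span ⟨m, ?_, rfl⟩)
        show m ∈ Submodule.comap φ (Ideal.span {π ^ 0} • ⊤)
        rw [pow_zero, Ideal.span_singleton_one, Submodule.top_smul]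
        exact Submodule.mem_comap.mpr trivial
    | add u v hu hv => exact Submodule.add_mem _ hu hv
  -- finrank bookkeeping
  have hquot : ∀ i, e i + Module.finrank F ↥(S (i + 1)) = Module.finrank F ↥(S i) := by
    intro i
    have h1 : Module.finrank F ↥(S (i + 1)) =
        Module.finrank F ↥(Submodule.comap (S i).subtype (S (i + 1))) :=
      (LinearEquiv.finrank_eq (Submodule.comapSubtypeEquivOfLe (hmonoS i))).symm
    rw [he i, h1]
    exact Submodule.finrank_quotient_add_finrank _
  have ecast : ∀ i, (e i : ℤ) =
      (Module.finrank F ↥(S i) : ℤ) - (Module.finrank F ↥(S (i + 1)) : ℤ) := by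
    intro i
    have := hquot i
    omega
  -- Artin–Rees stabilization
  obtain ⟨k, hk⟩ := Ideal.exists_pow_inf_eq_pow_smul (Ideal.span {π}) (LinearMap.range φ)
  have hstabS : ∀ i, k + 1 ≤ i → S i = K := by
    intro i hi
    refine le_antisymm ?_ (hKS i)
    rw [hS i, Submodule.span_le]
    rintro _ ⟨m, hm, rfl⟩
    have hmem : φ m ∈ Ideal.span {π ^ i} • (⊤ : Submodule R M) := hm
    have h1 : φ m ∈ (Ideal.span {π}) ^ i • (⊤ : Submodule R M) ⊓ LinearMap.range φ := by
      constructor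
      · rw [Ideal.span_singleton_pow]
        exact hmem
      · exact ⟨m, rfl⟩
    rw [hk i (by omega)] at h1
    have h2 : (Ideal.span {π}) ^ (i - k) •
        ((Ideal.span {π}) ^ k • (⊤ : Submodule R M) ⊓ LinearMap.range φ) ≤
        Ideal.span {π} • LinearMap.range φ :=
      Submodule.smul_mono (Ideal.pow_le_self (by omega)) inf_le_right
    have h3 : φ m ∈ Submodule.map φ (Ideal.span {π} • (⊤ : Submodule R M)) := by
      rw [Submodule.map_smul'', Submodule.map_top]
      exact h2 h1
    obtain ⟨m', hm', hmm'⟩ := Submodule.mem_map.mp h3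
    have hker : m - m' ∈ LinearMap.ker φ := by
      rw [LinearMap.mem_ker, map_sub, hmm', sub_self]
    have heq : (TensorProduct.mk R F M 1) m = (TensorProduct.mk R F M 1) (m - m') := by
      rw [map_sub, hmk0 m' hm', sub_zero]
    rw [heq, hKdef]
    exact Submodule.subset_span ⟨m - m', hker, rfl⟩
  -- the dimension function
  set fr : ℕ → ℤ := fun i => (Module.finrank F ↥(S i) : ℤ) with hfr
  have hfri : ∀ i, fr i = (Module.finrank F ↥(S i) : ℤ) := fun i => rfl
  have ecast' : ∀ i, (e i : ℤ) = fr i - fr (i + 1) := by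
    intro i; rw [hfri, hfri]; exact ecast i
  have hanti : ∀ i j : ℕ, i ≤ j → fr j ≤ fr i := by
    intro i j hij
    induction j, hij using Nat.le_induction with
    | base => exact le_rfl
    | succ n hn ih =>
      refine le_trans ?_ ih
      have := hquot n
      rw [hfri, hfri]
      omega
  have hge : ∀ i, (k₀ : ℤ) ≤ fr i := by
    intro i
    have h1 : Module.finrank F ↥K ≤ Module.finrank F ↥(S i) :=
      Submodule.finrank_mono (hKS i)
    have h2 : k₀ = Module.finrank F ↥K := hk₀
    rw [hfri]
    omega
  set L := max (k + 1) (a h + 1) with hLdef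
  have hstabf : ∀ i, L ≤ i → fr i = (k₀ : ℤ) := by
    intro i hi
    rw [hfri, hstabS i (by omega), hk₀]
  have hezero : ∀ i, L ≤ i → e i = 0 := by
    intro i hi
    have h1 := ecast' i
    rw [hstabf i hi, hstabf (i + 1) (by omega)] at h1
    omega
  have hdsum : (d : ℤ) = ∑ i ∈ Finset.range (L + 1), (i : ℤ) * (e i : ℤ) := by
    have h1 : d = ∑ i ∈ Finset.range (L + 1), i * e i := by
      rw [hd]
      refine tsum_eq_sum ?_
      intro i hi
      simp only [Finset.mem_range, not_lt] at hi
      rw [hezero i (by omega), mul_zero]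
    rw [h1]
    push_cast
    rfl
  have habel : (d : ℤ) = ∑ i ∈ Finset.Icc 1 L, (fr i - (k₀ : ℤ)) := by
    have h1 : ∑ i ∈ Finset.range (L + 1), (i : ℤ) * (e i : ℤ)
        = ∑ i ∈ Finset.range (L + 1), (i : ℤ) * (fr i - fr (i + 1)) :=
      Finset.sum_congr rfl fun i _ => by rw [ecast' i]
    rw [hdsum, h1, abel_sum fr L, hstabf (L + 1) (by omega), Finset.sum_sub_distrib,
      Finset.sum_const, Nat.card_Icc, Nat.add_sub_cancel, nsmul_eq_mul]
  obtain ⟨C1, C2, C3⟩ := comb_lemma fr (k₀ : ℤ) L hanti hge hstabf h hh a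
    (fun j => (b j : ℤ)) ha1 hamono
    (by show (b (h + 1) : ℤ) = (k₀ : ℤ); exact_mod_cast hbtop)
    (by
      intro j h1 h2
      have := hlb j h1 h2
      show (b j : ℤ) ≤ fr (a j)
      rw [hfri]
      exact_mod_cast this)
    (by omega)
    (by rw [hsum]; exact habel)
  refine ⟨?_, ?_, ?_⟩
  · intro j h1 h2
    rw [ecast' (a j)]
    exact C1 j h1 h2
  · have h0 : fr 0 = (Module.finrank F (F ⊗[R] M) : ℤ) := by
      rw [hfri, hS0]
      norm_cast
      exact finrank_top F (F ⊗[R] M)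
    have := ecast' 0
    rw [C2] at this
    rw [this, h0]
  · intro i hi0 hne
    have h1 := ecast' i
    rw [C3 i hi0 hne] at h1
    omega
end

section
/- Let (R,(π)) be a local principal ideal domain that is not a field, with residue field F = R/(π) and field of fractions K. Let M be a finitely generated free R-module and φ an R-module endomorphism of M, inducing φ_K on M_K = K ⊗_R M. Suppose u ∈ R is an eigenvalue of φ_K, and let d be the K-dimension of the eigenspace {m ∈ M_K | φ_K(m) = u·m}. Then for every b ≥ 0 with π^b dividing u, one has d ≤ dim_F M̄_b, where M_b = {m ∈ M | φ(m) ∈ π^b M} and M̄_b is its image in M/πM. -/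
open scoped TensorProduct

set_option maxHeartbeats 1000000 in
/-- Eigenspace bound: if `(R,(π))` is a local PID which is not a field, `M` a finitely
generated free `R`-module, `φ` an `R`-endomorphism of `M` and `u ∈ R` an eigenvalue of the
induced endomorphism of `K ⊗ M` (`K` the fraction field), then the dimension of the
`u`-eigenspace is at most `dim_F M̄_b` for every `b` with `π^b ∣ u`, where
`M_b = φ⁻¹(π^b M)` and `M̄_b` is its image in `M/πM ≅ F ⊗ M`. -/
theorem eigenspace_dim_le_dim_Mbar
    (R : Type) [CommRing R] [IsDomain R] [IsPrincipalIdealRing R] [IsLocalRing R]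
    (hR : ¬ IsField R)
    (π : R) (hπ : IsLocalRing.maximalIdeal R = Ideal.span {π})
    (M : Type) [AddCommGroup M] [Module R M] [Module.Free R M] [Module.Finite R M]
    (φ : M →ₗ[R] M)
    (u : R)
    (hu : Module.End.HasEigenvalue (LinearMap.baseChange (FractionRing R) φ)
      (algebraMap R (FractionRing R) u))
    (b : ℕ) (hb : π ^ b ∣ u) :
    Module.finrank (FractionRing R)
        ↥(Module.End.eigenspace (LinearMap.baseChange (FractionRing R) φ)
          (algebraMap R (FractionRing R) u)) ≤
      Module.finrank (IsLocalRing.ResidueField R)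
        ↥(Submodule.span (IsLocalRing.ResidueField R)
          (⇑(TensorProduct.mk R (IsLocalRing.ResidueField R) M 1) ''
            ↑(Submodule.comap φ (Ideal.span {π ^ b} • (⊤ : Submodule R M))))) := by
  classical
  set K := FractionRing R with hK
  set F := IsLocalRing.ResidueField R with hF
  have hπ0 : π ≠ 0 := by
    intro h
    exact hR (IsLocalRing.isField_iff_maximalIdeal_eq.mpr
      (by rw [hπ, h, Ideal.span_singleton_eq_bot]))
  set E := Module.End.eigenspace (LinearMap.baseChange K φ) (algebraMap R K u) with hE
  set ιK : M →ₗ[R] K ⊗[R] M := TensorProduct.mk R K M 1 with hιK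
  haveI hlm : IsLocalizedModule (nonZeroDivisors R) ιK :=
    (isLocalizedModule_iff_isBaseChange (nonZeroDivisors R) K _).mpr
      (TensorProduct.isBaseChange R M K)
  have hinj : Function.Injective ιK := by
    intro x y hxy
    have h0 : ιK (x - y) = 0 := by rw [map_sub, hxy, sub_self]
    obtain ⟨s, hs⟩ := (IsLocalizedModule.eq_zero_iff (nonZeroDivisors R) ιK).mp h0
    rw [Submonoid.smul_def, smul_eq_zero] at hs
    rcases hs with hs | hs
    · exact absurd hs (nonZeroDivisors.coe_ne_zero s)
    · exact sub_eq_zero.mp hs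
  have key : ∀ m : M, (LinearMap.baseChange K φ) (ιK m) = ιK (φ m) := fun m => by
    simp [hιK]
  have key2 : ∀ (r : R) (m : M), algebraMap R K r • ιK m = ιK (r • m) := fun r m => by
    rw [algebraMap_smul, map_smul]
  have hmem : ∀ m : M, ιK m ∈ E ↔ φ m = u • m := fun m => by
    rw [hE, Module.End.mem_eigenspace_iff, key, key2]
    exact ⟨fun h => hinj h, fun h => congrArg ιK h⟩
  set N : Submodule R M := (E.restrictScalars R).comap ιK with hN
  have hNmem : ∀ m : M, m ∈ N ↔ φ m = u • m := fun m => by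
    rw [hN, Submodule.mem_comap, Submodule.restrictScalars_mem, hmem]
  have hNmem' : ∀ m : M, m ∈ N ↔ ιK m ∈ E := fun m => Iff.rfl
  set Mb := Submodule.comap φ (Ideal.span {π ^ b} • (⊤ : Submodule R M)) with hMb
  have hNMb : N ≤ Mb := by
    intro m hm
    rw [hMb, Submodule.mem_comap, (hNmem m).mp hm, Submodule.ideal_span_singleton_smul]
    obtain ⟨c, hc⟩ := hb
    rw [hc, mul_smul]
    exact Submodule.smul_mem_pointwise_smul _ _ _ trivial
  -- basis of N
  obtain ⟨n, v⟩ := Submodule.basisOfPid (Module.Free.chooseBasis R M) N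
  have hvE : ∀ i, ιK ((v i : N) : M) ∈ E := fun i => (hNmem' _).mp (v i).2
  have hliR : LinearIndependent R (fun i => ((v i : N) : M)) := by
    have := v.linearIndependent.map' N.subtype N.ker_subtype
    exact this
  have hliK : LinearIndependent K (fun i => ιK ((v i : N) : M)) :=
    hliR.of_isLocalizedModule K (nonZeroDivisors R) ιK
  -- membership in N for scaled eigenvectors
  have hEN : ∀ m : M, ιK m ∈ E → m ∈ N := fun m hm => (hNmem' m).mpr hm
  have hπK : algebraMap R K π ≠ 0 := fun h =>
    hπ0 ((map_eq_zero_iff _ (IsFractionRing.injective R K)).mp h)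
  -- span of eigenvectors
  have hspan : ∀ x : K ⊗[R] M, x ∈ E →
      x ∈ Submodule.span K (Set.range fun i => ιK ((v i : N) : M)) := by
    intro x hx
    obtain ⟨⟨m, s⟩, hms⟩ := IsLocalizedModule.surj (nonZeroDivisors R) ιK x
    have hsK : algebraMap R K (s : R) ≠ 0 := fun h =>
      nonZeroDivisors.coe_ne_zero s ((map_eq_zero_iff _ (IsFractionRing.injective R K)).mp h)
    have hmE : ιK m ∈ E := by
      rw [← hms, Submonoid.smul_def, ← algebraMap_smul K (s : R) x]
      exact E.smul_mem _ hx
    have hmN : m ∈ N := hEN m hmE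
    have hx' : x = (algebraMap R K (s : R))⁻¹ • ιK m := by
      rw [← hms, Submonoid.smul_def, ← algebraMap_smul K (s : R) x, inv_smul_smul₀ hsK]
    rw [hx']
    refine Submodule.smul_mem _ _ ?_
    have hmspan : m ∈ Submodule.span R (Set.range fun i => ((v i : N) : M)) := by
      have h1 : m ∈ Submodule.map N.subtype (Submodule.span R (Set.range v)) := by
        rw [v.span_eq, Submodule.map_top, Submodule.range_subtype]
        exact hmN
      rw [Submodule.map_span] at h1
      rw [show (Set.range fun i => ((v i : N) : M)) = N.subtype '' Set.range v by
        rw [← Set.range_comp]; rfl]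
      exact h1
    have h2 : ιK m ∈ Submodule.map ιK
        (Submodule.span R (Set.range fun i => ((v i : N) : M))) :=
      Submodule.mem_map_of_mem hmspan
    rw [Submodule.map_span] at h2
    have h3 := Submodule.span_le_restrictScalars R K
      (ιK '' Set.range fun i => ((v i : N) : M))
    have h4 := h3 h2
    rw [Submodule.restrictScalars_mem] at h4
    rwa [show (Set.range fun i => ιK ((v i : N) : M)) =
      ιK '' Set.range fun i => ((v i : N) : M) by rw [← Set.range_comp]; rfl]
  -- finrank bound for E
  have hEfin : Module.finrank K E ≤ n := by
    have h1 : E ≤ Submodule.span K (Set.range fun i => ιK ((v i : N) : M)) := hspan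
    haveI := FiniteDimensional.span_of_finite K
      (Set.finite_range (fun i => ιK ((v i : N) : M)))
    have h2 := Submodule.finrank_mono h1
    have h3 := finrank_span_le_card (R := K) (Set.range fun i => ιK ((v i : N) : M))
    refine h2.trans (h3.trans ?_)
    rw [Set.toFinset_card]
    exact (Fintype.card_range_le _).trans (le_of_eq (Fintype.card_fin n))
  -- residue side
  set ιF : M →ₗ[R] F ⊗[R] M := TensorProduct.mk R F M 1 with hιF
  have hker : ∀ m : M, ιF m = 0 → m ∈ (Ideal.span {π} • ⊤ : Submodule R M) := by
    intro m h0
    have h := congrFun (congrArg (DFunLike.coe)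
      (TensorProduct.quotTensorEquivQuotSMul_comp_mk (M := M)
        (I := IsLocalRing.maximalIdeal R))) m
    simp only [LinearMap.coe_comp, Function.comp_apply, LinearEquiv.coe_coe] at h
    have h0' : (TensorProduct.quotTensorEquivQuotSMul M (IsLocalRing.maximalIdeal R))
        ((TensorProduct.mk R (R ⧸ IsLocalRing.maximalIdeal R) M 1) m) = 0 := by
      rw [show (TensorProduct.mk R (R ⧸ IsLocalRing.maximalIdeal R) M 1) m = 0 from h0,
        map_zero]
    rw [h] at h0'
    have := (Submodule.Quotient.mk_eq_zero _).mp h0'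
    rwa [hπ] at this
  have hresid : ∀ (r : R) (x : M), ιF (r • x) = (IsLocalRing.residue R r) • ιF x := by
    intro r x
    rw [map_smul, ← algebraMap_smul F r (ιF x), IsLocalRing.ResidueField.algebraMap_eq]
  have hliF : ∀ g : Fin n → F, (∑ i, g i • ιF ((v i : N) : M)) = 0 → ∀ i, g i = 0 := by
    intro g hg
    choose c hc using fun i => IsLocalRing.residue_surjective (R := R) (g i)
    have hsum : ιF (∑ i, c i • ((v i : N) : M)) = 0 := by
      rw [map_sum]
      rw [← hg]
      congr 1
      ext i
      rw [hresid, hc]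
    have hmem2 := hker _ hsum
    rw [Submodule.ideal_span_singleton_smul] at hmem2
    rw [← SetLike.mem_coe, Submodule.coe_pointwise_smul] at hmem2
    obtain ⟨m', -, hm'⟩ := Set.mem_smul_set.mp hmem2
    have hmN : (∑ i, c i • ((v i : N) : M)) ∈ N := by
      apply Submodule.sum_mem
      intro i _
      exact N.smul_mem _ (v i).2
    have hm'N : m' ∈ N := by
      rw [hNmem']
      have h1 : ιK (π • m') ∈ E := by
        rw [hm']
        exact (hNmem' _).mp hmN
      rw [← key2] at h1
      have := E.smul_mem (algebraMap R K π)⁻¹ h1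
      rwa [inv_smul_smul₀ hπK] at this
    have hsub : (∑ i, c i • v i : N) = π • (⟨m', hm'N⟩ : N) := by
      apply Subtype.ext
      have hco : ((∑ i, c i • v i : N) : M) = ∑ i, c i • ((v i : N) : M) := by simp
      rw [hco, ← hm']
      rfl
    intro i
    have h1 : v.repr (∑ i, c i • v i) i = c i := by
      rw [Module.Basis.repr_sum_self]
    have h2 : v.repr (π • (⟨m', hm'N⟩ : N)) i = π * v.repr ⟨m', hm'N⟩ i := by
      rw [map_smul]; rfl
    have hci : c i = π * v.repr ⟨m', hm'N⟩ i := by rw [← h1, hsub, h2]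
    rw [← hc i, hci, map_mul]
    have hπ0' : IsLocalRing.residue R π = 0 := by
      rw [IsLocalRing.residue_eq_zero_iff, hπ]
      exact Ideal.mem_span_singleton_self π
    rw [hπ0', zero_mul]
  -- finish
  set Mbar := Submodule.span F (⇑ιF '' (Mb : Set M)) with hMbar
  let w : Fin n → Mbar := fun i =>
    ⟨ιF ((v i : N) : M), Submodule.subset_span ⟨((v i : N) : M), hNMb (v i).2, rfl⟩⟩
  have hwcoe : ∀ i, ((w i : Mbar) : F ⊗[R] M) = ιF ((v i : N) : M) := fun i => rfl
  have hliw : LinearIndependent F w := by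
    apply LinearIndependent.of_comp Mbar.subtype
    rw [Fintype.linearIndependent_iff]
    intro g hg
    refine hliF g ?_
    simpa [hwcoe] using hg
  have hcard : n ≤ Module.finrank F Mbar := by
    have := hliw.fintype_card_le_finrank
    simpa using this
  exact hEfin.trans hcard
end

section
/- Let q be a power of a prime p, let n ≥ 4, and set r = q²·[n−3 choose 1]_q − 1, s = −(q+1), and k' = q(q+1)·[n−2 choose 1]_q, where [m choose 1]_q = (q^m − 1)/(q − 1). Then: (a) if n is odd, gcd(r,s) = 1, gcd(k',s) = q+1, and gcd(k',r) = 1; (b) if n is even, gcd(r,s) = q+1, gcd(s,k') = q+1, and every common prime divisor of r and k' divides q+1. -/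
/-- The Gaussian binomial coefficient `[m choose 1]_q = 1 + q + q^2 + ⋯ + q^(m-1)`. -/
def gauss1 (q m : ℕ) : ℕ := ∑ i ∈ Finset.range m, q ^ i

lemma gauss1_succ_int (q m : ℕ) : (gauss1 q (m + 1) : ℤ) = q * gauss1 q m + 1 := by
  simp [gauss1, geom_sum_succ]

lemma gauss1_parity (q : ℕ) :
    ∀ j : ℕ, ((q : ℤ) + 1) ∣ (gauss1 q (2 * j) : ℤ) ∧
      ((q : ℤ) + 1) ∣ (gauss1 q (2 * j + 1) : ℤ) - 1 := by
  intro j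
  induction j with
  | zero =>
      constructor
      · simp [gauss1]
      · simp [gauss1]
  | succ j ih =>
      have h1 : (gauss1 q (2 * (j + 1)) : ℤ) = q * gauss1 q (2 * j + 1) + 1 := by
        have : 2 * (j + 1) = (2 * j + 1) + 1 := by ring
        rw [this, gauss1_succ_int]
      have hE : ((q : ℤ) + 1) ∣ (gauss1 q (2 * (j + 1)) : ℤ) := by
        obtain ⟨c, hc⟩ := ih.2
        refine ⟨q * c + 1, ?_⟩
        have : (gauss1 q (2 * j + 1) : ℤ) = ((q : ℤ) + 1) * c + 1 := by linarith
        rw [h1, this]; ring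
      refine ⟨hE, ?_⟩
      have h2 : (gauss1 q (2 * (j + 1) + 1) : ℤ) = q * gauss1 q (2 * (j + 1)) + 1 := by
        rw [gauss1_succ_int]
      obtain ⟨c, hc⟩ := hE
      exact ⟨q * c, by rw [h2, hc]; ring⟩

lemma int_gcd_eq_natAbs_right (a b : ℤ) (h : b ∣ a) : Int.gcd a b = b.natAbs :=
  Nat.gcd_eq_right (Int.natAbs_dvd_natAbs.mpr h)

lemma int_gcd_eq_natAbs_left (a b : ℤ) (h : a ∣ b) : Int.gcd a b = a.natAbs :=
  Nat.gcd_eq_left (Int.natAbs_dvd_natAbs.mpr h)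

/-- Lemma on the gcds of the restricted eigenvalues `r = q²[n−3]_q − 1`, `s = −(q+1)` and the
valency `k' = q(q+1)[n−2]_q` of the Grassmann graph on `2`-subspaces of `F_q^n`. -/
theorem gcd_eigenvalues_grassmann_adjacency
    (p t n : ℕ) (hp : p.Prime) (ht : 1 ≤ t) (hn : 4 ≤ n)
    (q : ℕ) (hq : q = p ^ t)
    (r s k' : ℤ)
    (hr : r = (q : ℤ) ^ 2 * (gauss1 q (n - 3) : ℤ) - 1)
    (hs : s = -((q : ℤ) + 1))
    (hk' : k' = (q : ℤ) * ((q : ℤ) + 1) * (gauss1 q (n - 2) : ℤ)) :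
    (Odd n → Int.gcd r s = 1 ∧ Int.gcd k' s = q + 1 ∧ Int.gcd k' r = 1) ∧
    (Even n → Int.gcd r s = q + 1 ∧ Int.gcd s k' = q + 1 ∧
      (∀ ℓ : ℕ, ℓ.Prime → (ℓ : ℤ) ∣ r → (ℓ : ℤ) ∣ k' → (ℓ : ℤ) ∣ ((q : ℤ) + 1))) := by
  have hsAbs : s.natAbs = q + 1 := by
    rw [hs]
    have : -((q : ℤ) + 1) = -((q + 1 : ℕ) : ℤ) := by push_cast; ring
    rw [this, Int.natAbs_neg, Int.natAbs_natCast]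
  -- s divides k'
  have hs_dvd_k : s ∣ k' := by
    rw [hs, hk']
    exact ⟨-((q : ℤ) * gauss1 q (n - 2)), by ring⟩
  have hgcd_ks : Int.gcd k' s = q + 1 := by
    rw [int_gcd_eq_natAbs_right k' s hs_dvd_k, hsAbs]
  -- the key identity : k' = (q+1) r + (q+1)^2
  have hn2 : n - 2 = (n - 3) + 1 := by omega
  have hG2 : (gauss1 q (n - 2) : ℤ) = q * gauss1 q (n - 3) + 1 := by
    rw [hn2, gauss1_succ_int]
  have hkey : k' = ((q : ℤ) + 1) * r + ((q : ℤ) + 1) ^ 2 := by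
    rw [hk', hG2, hr]; ring
  constructor
  · -- n odd
    intro hodd
    have h3 : (n - 3) % 2 = 0 := by
      have := Nat.odd_iff.mp hodd; omega
    obtain ⟨j, hj⟩ : ∃ j, n - 3 = 2 * j := ⟨(n - 3) / 2, by omega⟩
    have hGdvd : ((q : ℤ) + 1) ∣ (gauss1 q (n - 3) : ℤ) := by
      rw [hj]; exact (gauss1_parity q j).1
    -- (q+1) ∣ r + 1
    have hr1 : ((q : ℤ) + 1) ∣ r + 1 := by
      obtain ⟨c, hc⟩ := hGdvd
      exact ⟨(q : ℤ) ^ 2 * c, by rw [hr, hc]; ring⟩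
    have hgcd_rs : Int.gcd r s = 1 := by
      have hd1 : (Int.gcd r s : ℤ) ∣ r := Int.gcd_dvd_left r s
      have hd2 : (Int.gcd r s : ℤ) ∣ s := Int.gcd_dvd_right r s
      have hd3 : (Int.gcd r s : ℤ) ∣ r + 1 := by
        refine dvd_trans hd2 ?_
        obtain ⟨c, hc⟩ := hr1
        exact ⟨-c, by rw [hs] at *; rw [hc]; ring⟩
      have : (Int.gcd r s : ℤ) ∣ 1 := by
        have := dvd_sub hd3 hd1; simpa using this
      exact Nat.dvd_one.mp (by exact_mod_cast this)
    refine ⟨hgcd_rs, hgcd_ks, ?_⟩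
    -- gcd k' r = 1
    obtain ⟨c, hc⟩ := hr1
    have hc1 : IsCoprime ((q : ℤ) + 1) r := ⟨c, -1, by linarith⟩
    have hc2 : IsCoprime (((q : ℤ) + 1) ^ 2) r := hc1.pow_left
    have hform : k' = ((q : ℤ) + 1) ^ 2 + r * ((q : ℤ) + 1) := by rw [hkey]; ring
    have hc3 : IsCoprime k' r := by
      rw [hform]; exact hc2.add_mul_left_left _
    exact Int.isCoprime_iff_gcd_eq_one.mp hc3
  · -- n even
    intro heven
    have h3 : (n - 3) % 2 = 1 := by
      have := Nat.even_iff.mp heven; omega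
    obtain ⟨j, hj⟩ : ∃ j, n - 3 = 2 * j + 1 := ⟨(n - 3 - 1) / 2, by omega⟩
    have hGdvd : ((q : ℤ) + 1) ∣ (gauss1 q (n - 3) : ℤ) - 1 := by
      rw [hj]; exact (gauss1_parity q j).2
    -- (q+1) ∣ r
    have hrdvd : ((q : ℤ) + 1) ∣ r := by
      obtain ⟨c, hc⟩ := hGdvd
      refine ⟨(q : ℤ) ^ 2 * c + ((q : ℤ) - 1), ?_⟩
      have : (gauss1 q (n - 3) : ℤ) = ((q : ℤ) + 1) * c + 1 := by linarith
      rw [hr, this]; ring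
    have hs_dvd_r : s ∣ r := by
      rw [hs]; obtain ⟨c, hc⟩ := hrdvd; exact ⟨-c, by rw [hc]; ring⟩
    refine ⟨?_, ?_, ?_⟩
    · rw [int_gcd_eq_natAbs_right r s hs_dvd_r, hsAbs]
    · rw [int_gcd_eq_natAbs_left s k' hs_dvd_k, hsAbs]
    · intro ℓ hℓ hℓr hℓk
      have hprime : Prime (ℓ : ℤ) := Nat.prime_iff_prime_int.mp hℓ
      have hdvdsq : (ℓ : ℤ) ∣ ((q : ℤ) + 1) ^ 2 := by
        have : ((q : ℤ) + 1) ^ 2 = k' - ((q : ℤ) + 1) * r := by rw [hkey]; ring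
        rw [this]
        exact dvd_sub hℓk (Dvd.dvd.mul_left hℓr _)
      exact hprime.dvd_of_dvd_pow hdvdsq
end

section
/- Let q = p^t be a prime power, let V = F_q^n with n ≥ 4, and let L' = k'I − A' be the integer Laplacian matrix of the Grassmann graph Γ' on 2-dimensional subspaces of V, where k' = q(q+1)[n−2 choose 1]_q and A' is the adjacency matrix. Let K(Γ') be the critical group of Γ', i.e., the torsion subgroup of the cokernel ℤ^{L₂}/L'(ℤ^{L₂}). Then the order of K(Γ') is coprime to p; equivalently, L' has no elementary divisors divisible by p. -/
open scoped Classical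

/-- The set of lines: `2`-dimensional subspaces of `F^n`. -/
abbrev TwoSubspaces (F : Type) [Field F] (n : ℕ) : Type :=
  {W : Submodule F (Fin n → F) // Module.finrank F W = 2}

/-- The cokernel `ℤ^{L₂}/M(ℤ^{L₂})` of an integer matrix `M` indexed by a finite type. -/
abbrev cokernel {V : Type} [Fintype V] (M : Matrix V V ℤ) : Type :=
  (V → ℤ) ⧸ LinearMap.range (Matrix.mulVecLin M)

set_option linter.unusedSectionVars false

lemma glue {α : Type} [Fintype α] (P : α → Prop) [DecidablePred P] :
    Nat.card {x // P x} = (Finset.univ.filter P).card := by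
  simp [Nat.card_eq_fintype_card, Fintype.card_subtype]

lemma natcard_two {F : Type} [Field F] {V : Type} [AddCommGroup V] [Module F V]
    (Pred : Submodule F V → Prop) :
    Nat.card {u : {W : Submodule F V // Module.finrank F W = 2} // Pred u.1}
      = Nat.card {u : Submodule F V // Module.finrank F u = 2 ∧ Pred u} :=
  Nat.card_congr (Equiv.subtypeSubtypeEquivSubtypeInter _ _)

lemma gauss1_succ (q m : ℕ) : gauss1 q (m + 1) = q * gauss1 q m + 1 := by
  unfold gauss1
  rw [Finset.sum_range_succ']
  simp [Finset.mul_sum, pow_succ, mul_comm]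

lemma gauss1_cast_mul (q m : ℕ) :
    (gauss1 q m : ℤ) * (q - 1) = (q : ℤ) ^ m - 1 := by
  unfold gauss1
  push_cast
  exact geom_sum_mul _ _


section Geom

variable {F : Type} [Field F] [Fintype F] {V : Type} [AddCommGroup V] [Module F V]
  [FiniteDimensional F V] [Fintype V] [Fintype (Submodule F V)]

open Module Submodule Finset

-- the fundamental count
lemma count_subspaces (P0 W : Submodule F V) (hPW : P0 ≤ W) :
    (univ.filter fun u : Submodule F V =>
      P0 ≤ u ∧ u ≤ W ∧ finrank F u = finrank F P0 + 1).card
      = gauss1 (Fintype.card F) (finrank F W - finrank F P0) := by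
  set q := Fintype.card F with hqdef
  have hq2 : 2 ≤ q := Fintype.one_lt_card
  set r := finrank F P0 with hr
  set m := finrank F W with hm
  have hrm : r ≤ m := Submodule.finrank_mono hPW
  set t : Finset (Submodule F V) :=
    univ.filter (fun u : Submodule F V => P0 ≤ u ∧ u ≤ W ∧ finrank F u = r + 1) with ht
  set s : Finset V := univ.filter (fun x => x ∈ W ∧ x ∉ P0) with hs
  -- card of a submodule of given rank
  have cardsub : ∀ u : Submodule F V, (univ.filter (fun x => x ∈ u)).card = q ^ finrank F u := by
    intro u
    rw [← Fintype.card_subtype, hqdef]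
    exact card_eq_pow_finrank
  -- f maps s into t
  have hspan : ∀ x : V, x ∈ W → x ∉ P0 →
      (P0 ≤ P0 ⊔ span F {x} ∧ P0 ⊔ span F {x} ≤ W ∧ finrank F ↥(P0 ⊔ span F {x}) = r + 1) := by
    intro x hxW hxP
    have hx0 : x ≠ 0 := fun h => hxP (h ▸ P0.zero_mem)
    have hinf : P0 ⊓ span F {x} = ⊥ := by
      rw [eq_bot_iff]
      rintro y ⟨hy1, hy2⟩
      rcases Submodule.mem_span_singleton.mp hy2 with ⟨c, rfl⟩
      rcases eq_or_ne c 0 with rfl | hc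
      · simp
      · exfalso
        apply hxP
        have h := P0.smul_mem c⁻¹ hy1
        rwa [smul_smul, inv_mul_cancel₀ hc, one_smul] at h
    refine ⟨le_sup_left, sup_le hPW (span_le.mpr (by simpa using hxW)), ?_⟩
    have := Submodule.finrank_sup_add_finrank_inf_eq P0 (span F {x})
    rw [hinf, finrank_span_singleton hx0] at this
    simpa using this
  have hmaps : ∀ x ∈ s, P0 ⊔ span F {x} ∈ t := by
    intro x hx
    rw [hs, mem_filter] at hx
    rw [ht, mem_filter]
    exact ⟨mem_univ _, hspan x hx.2.1 hx.2.2⟩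
  have hfib := Finset.card_eq_sum_card_fiberwise hmaps
  have hfibcard : ∀ u ∈ t, (s.filter (fun x => P0 ⊔ span F {x} = u)).card + q ^ r = q ^ (r+1) := by
    intro u hu
    rw [ht, mem_filter] at hu
    obtain ⟨-, hPu, huW, hur⟩ := hu
    have hset : s.filter (fun x => P0 ⊔ span F {x} = u) = univ.filter (fun x => x ∈ u ∧ x ∉ P0) := by
      ext x
      simp only [hs, mem_filter, mem_univ, true_and]
      constructor
      · rintro ⟨⟨hxW, hxP⟩, hfx⟩
        exact ⟨hfx ▸ le_sup_right (a := P0) (Submodule.mem_span_singleton_self x), hxP⟩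
      · rintro ⟨hxu, hxP⟩
        have hxW : x ∈ W := huW hxu
        refine ⟨⟨hxW, hxP⟩, ?_⟩
        have h1 := hspan x hxW hxP
        exact Submodule.eq_of_le_of_finrank_le
          (sup_le hPu (span_le.mpr (by simpa using hxu))) (by rw [hur, h1.2.2])
    rw [hset]
    have hsetd : univ.filter (fun x : V => x ∈ u ∧ x ∉ P0)
        = univ.filter (fun x : V => x ∈ u) \ univ.filter (fun x : V => x ∈ P0) := by
      ext x
      simp only [mem_sdiff, mem_filter, mem_univ, true_and]
    have hcd : (univ.filter (fun x : V => x ∈ u ∧ x ∉ P0)).card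
        = (univ.filter (fun x : V => x ∈ u)).card - (univ.filter (fun x : V => x ∈ P0)).card := by
      rw [hsetd]
      exact Finset.card_sdiff_of_subset (by
        intro x hx
        rw [mem_filter] at hx ⊢
        exact ⟨hx.1, hPu hx.2⟩)
    rw [hcd, cardsub, cardsub, hur, ← hr]
    have hle : q ^ r ≤ q ^ (r + 1) := Nat.pow_le_pow_right (by omega) (by omega)
    omega
  have hscard : s.card + q ^ r = q ^ m := by
    have hsetd : s = univ.filter (fun x : V => x ∈ W) \ univ.filter (fun x : V => x ∈ P0) := by
      ext x
      simp only [hs, mem_sdiff, mem_filter, mem_univ, true_and]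
    have hcd : s.card = (univ.filter (fun x : V => x ∈ W)).card - (univ.filter (fun x : V => x ∈ P0)).card := by
      rw [hsetd]
      exact Finset.card_sdiff_of_subset (by
        intro x hx
        rw [mem_filter] at hx ⊢
        exact ⟨hx.1, hPW hx.2⟩)
    rw [hcd, cardsub, cardsub, ← hr, ← hm]
    have hle : q ^ r ≤ q ^ m := Nat.pow_le_pow_right (by omega) hrm
    omega
  have hsum : s.card + t.card * q ^ r = t.card * q ^ (r + 1) :=
    calc s.card + t.card * q ^ r
        = ∑ u ∈ t, ((s.filter fun x => P0 ⊔ span F {x} = u).card + q ^ r) := by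
          rw [Finset.sum_add_distrib, Finset.sum_const, smul_eq_mul, hfib]
      _ = ∑ _u ∈ t, q ^ (r+1) := Finset.sum_congr rfl hfibcard
      _ = t.card * q ^ (r+1) := by rw [Finset.sum_const, smul_eq_mul]
  have E : t.card * q ^ (r+1) + q ^ r = q ^ m + t.card * q ^ r := by
    rw [← hsum, ← hscard]; ring
  have Ez : (t.card : ℤ) * (q:ℤ) ^ (r+1) + (q:ℤ) ^ r = (q:ℤ) ^ m + (t.card : ℤ) * (q:ℤ) ^ r := by
    exact_mod_cast E
  have hg : (gauss1 q (m-r) : ℤ) * ((q:ℤ)^(r+1) - (q:ℤ)^r) = (q:ℤ)^m - (q:ℤ)^r := by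
    have h1 := gauss1_cast_mul q (m-r)
    have hpow : (q:ℤ)^r * (q:ℤ)^(m-r) = (q:ℤ)^m := by rw [← pow_add]; congr 1; omega
    linear_combination (q:ℤ)^r * h1 + hpow
  have htz : (t.card : ℤ) * ((q:ℤ)^(r+1) - (q:ℤ)^r) = (q:ℤ)^m - (q:ℤ)^r := by
    linear_combination Ez
  have hD : ((q:ℤ)^(r+1) - (q:ℤ)^r) ≠ 0 := by
    have h1 : (q:ℤ)^r < (q:ℤ)^(r+1) :=
      pow_lt_pow_right₀ (by exact_mod_cast hq2) (by omega)
    exact sub_ne_zero.mpr (ne_of_gt h1)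
  have : (t.card : ℤ) = (gauss1 q (m-r) : ℤ) :=
    mul_right_cancel₀ hD (by rw [htz, hg])
  exact_mod_cast this


-- points of a 2-dim subspace
lemma count_points (v : Submodule F V) (hv : finrank F v = 2) :
    (univ.filter fun P : Submodule F V => P ≤ v ∧ finrank F P = 1).card
      = Fintype.card F + 1 := by
  have h := count_subspaces (⊥ : Submodule F V) v bot_le
  rw [finrank_bot] at h
  have he : (univ.filter fun u : Submodule F V => ⊥ ≤ u ∧ u ≤ v ∧ finrank F u = 0 + 1)
      = univ.filter fun P : Submodule F V => P ≤ v ∧ finrank F P = 1 := by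
    ext u; simp
  rw [he, hv] at h
  rw [h]
  show gauss1 (Fintype.card F) (1 + 1) = _
  rw [gauss1_succ, gauss1_succ]
  simp [gauss1, mul_comm]

-- lines through a point
lemma count_lines_through (P : Submodule F V) (hP : finrank F P = 1) :
    (univ.filter fun u : Submodule F V => P ≤ u ∧ finrank F u = 2).card
      = gauss1 (Fintype.card F) (finrank F V - 1) := by
  have h := count_subspaces P (⊤ : Submodule F V) le_top
  rw [hP, finrank_top] at h
  have he : (univ.filter fun u : Submodule F V => P ≤ u ∧ u ≤ ⊤ ∧ finrank F u = 1 + 1)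
      = univ.filter fun u : Submodule F V => P ≤ u ∧ finrank F u = 2 := by
    ext u; simp
  rwa [he] at h

-- G1 : intersection of distinct planes meeting nontrivially is a point
lemma inf_finrank_one {u v : Submodule F V} (hu : finrank F u = 2) (hv : finrank F v = 2)
    (hne : u ≠ v) (hint : u ⊓ v ≠ ⊥) : finrank F ↥(u ⊓ v) = 1 := by
  have h1 : 0 < finrank F ↥(u ⊓ v) := by
    rw [Nat.pos_iff_ne_zero]
    intro h0
    exact hint (Submodule.finrank_eq_zero.mp h0)
  have h2 : finrank F ↥(u ⊓ v) ≤ 2 := hu ▸ Submodule.finrank_mono inf_le_left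
  interval_cases h : finrank F ↥(u ⊓ v)
  · rfl
  · exfalso
    have huv : u ⊓ v = u := Submodule.eq_of_le_of_finrank_le inf_le_left (by omega)
    have hle : u ≤ v := huv ▸ inf_le_right
    exact hne (Submodule.eq_of_le_of_finrank_le hle (by omega))

-- G2 : join of two distinct points is a plane, and their inter is ⊥
lemma points_inf_bot {P Q : Submodule F V} (hP : finrank F P = 1) (hQ : finrank F Q = 1)
    (hne : P ≠ Q) : P ⊓ Q = ⊥ := by
  by_contra hb
  have h1 : 0 < finrank F ↥(P ⊓ Q) := by
    rw [Nat.pos_iff_ne_zero]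
    exact fun h0 => hb (Submodule.finrank_eq_zero.mp h0)
  have hPQ : P ⊓ Q = P := Submodule.eq_of_le_of_finrank_le inf_le_left (by omega)
  have hle : P ≤ Q := hPQ ▸ inf_le_right
  exact hne (Submodule.eq_of_le_of_finrank_le hle (by omega))

lemma sup_points_finrank {P Q : Submodule F V} (hP : finrank F P = 1) (hQ : finrank F Q = 1)
    (hne : P ≠ Q) : finrank F ↥(P ⊔ Q) = 2 := by
  have h := Submodule.finrank_sup_add_finrank_inf_eq P Q
  rw [points_inf_bot hP hQ hne, hP, hQ, finrank_bot] at h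
  omega


lemma point_ne_bot {P : Submodule F V} (hP : finrank F P = 1) : P ≠ ⊥ := by
  intro h
  rw [h, finrank_bot] at hP
  omega

lemma point_eq_of_le {P Q : Submodule F V} (hP : finrank F P = 1) (hQ : finrank F Q = 1)
    (h : P ≤ Q) : P = Q :=
  Submodule.eq_of_le_of_finrank_le h (by omega)

lemma plane_eq_of_le {u v : Submodule F V} (hu : finrank F u = 2) (hv : finrank F v = 2)
    (h : u ≤ v) : u = v :=
  Submodule.eq_of_le_of_finrank_le h (by omega)

-- degree count
lemma count_degree (v : Submodule F V) (hv : finrank F v = 2) (hn : 2 ≤ finrank F V) :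
    (univ.filter fun u : Submodule F V => finrank F u = 2 ∧ u ≠ v ∧ u ⊓ v ≠ ⊥).card
      = (Fintype.card F + 1) * (Fintype.card F * gauss1 (Fintype.card F) (finrank F V - 2)) := by
  set q := Fintype.card F
  set n := finrank F V
  have hg : gauss1 q (n - 1) = q * gauss1 q (n - 2) + 1 := by
    have : n - 1 = (n - 2) + 1 := by omega
    rw [this, gauss1_succ]
  set s := univ.filter fun u : Submodule F V => finrank F u = 2 ∧ u ≠ v ∧ u ⊓ v ≠ ⊥ with hs
  set t := univ.filter fun P : Submodule F V => P ≤ v ∧ finrank F P = 1 with htdef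
  have hmaps : ∀ u ∈ s, u ⊓ v ∈ t := by
    intro u hu
    rw [hs, mem_filter] at hu
    rw [htdef, mem_filter]
    exact ⟨mem_univ _, inf_le_right, inf_finrank_one hu.2.1 hv hu.2.2.1 hu.2.2.2⟩
  rw [Finset.card_eq_sum_card_fiberwise hmaps]
  have hfib : ∀ P ∈ t, (s.filter fun u => u ⊓ v = P).card = q * gauss1 q (n - 2) := by
    intro P hP
    rw [htdef, mem_filter] at hP
    obtain ⟨-, hPv, hP1⟩ := hP
    have hset : s.filter (fun u => u ⊓ v = P)
        = (univ.filter fun u : Submodule F V => P ≤ u ∧ finrank F u = 2).erase v := by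
      ext u
      simp only [hs, mem_filter, mem_univ, true_and, mem_erase, Finset.filter_filter]
      constructor
      · rintro ⟨⟨h2, hne, hib⟩, hiv⟩
        exact ⟨hne, hiv ▸ inf_le_left, h2⟩
      · rintro ⟨hne, hPu, h2⟩
        have hPuv : P ≤ u ⊓ v := le_inf hPu hPv
        have hib : u ⊓ v ≠ ⊥ := fun h => point_ne_bot hP1 (le_bot_iff.mp (h ▸ hPuv))
        exact ⟨⟨h2, hne, hib⟩,
          (point_eq_of_le hP1 (inf_finrank_one h2 hv hne hib) hPuv).symm⟩
    rw [hset, Finset.card_erase_of_mem (by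
      rw [mem_filter]; exact ⟨mem_univ _, hPv, hv⟩), count_lines_through P hP1]
    rw [hg]
    omega
  rw [Finset.sum_congr rfl hfib, Finset.sum_const, smul_eq_mul, count_points v hv]

-- adjacent count
lemma count_adjacent (v w : Submodule F V) (hv : finrank F v = 2) (hw : finrank F w = 2)
    (hne : v ≠ w) (hmeet : v ⊓ w ≠ ⊥) :
    (univ.filter fun u : Submodule F V => finrank F u = 2 ∧ u ⊓ v ≠ ⊥ ∧ u ⊓ w ≠ ⊥).card
      = gauss1 (Fintype.card F) (finrank F V - 1) + Fintype.card F * Fintype.card F := by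
  classical
  set q := Fintype.card F
  set n := finrank F V
  set P0 := v ⊓ w with hP0def
  have hP0 : finrank F P0 = 1 := inf_finrank_one hv hw hne hmeet
  set s := univ.filter fun u : Submodule F V => finrank F u = 2 ∧ u ⊓ v ≠ ⊥ ∧ u ⊓ w ≠ ⊥ with hs
  have hsplit := Finset.card_filter_add_card_filter_not (s := s) (fun u => P0 ≤ u)
  have h1 : (s.filter fun u => P0 ≤ u) = univ.filter fun u : Submodule F V => P0 ≤ u ∧ finrank F u = 2 := by
    ext u
    simp only [hs, mem_filter, mem_univ, true_and, Finset.filter_filter]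
    constructor
    · rintro ⟨⟨h2, -, -⟩, hle⟩
      exact ⟨hle, h2⟩
    · rintro ⟨hle, h2⟩
      have hb := point_ne_bot hP0
      refine ⟨⟨h2, ?_, ?_⟩, hle⟩
      · exact fun h => hb (le_bot_iff.mp (h ▸ le_inf hle (hP0def ▸ inf_le_left : P0 ≤ v)))
      · exact fun h => hb (le_bot_iff.mp (h ▸ le_inf hle (hP0def ▸ inf_le_right : P0 ≤ w)))
  have h2 : (s.filter fun u => ¬ P0 ≤ u).card
      = (((univ.filter fun P : Submodule F V => P ≤ v ∧ finrank F P = 1).erase P0) ×ˢ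
         ((univ.filter fun Q : Submodule F V => Q ≤ w ∧ finrank F Q = 1).erase P0)).card := by
    apply Finset.card_bij (fun u _ => (u ⊓ v, u ⊓ w))
    · intro u hu
      rw [Finset.mem_filter] at hu
      obtain ⟨hus, hnle⟩ := hu
      rw [hs, mem_filter] at hus
      obtain ⟨-, h2, hiv, hiw⟩ := hus
      have hunv : u ≠ v := fun h => hnle (h ▸ (hP0def ▸ inf_le_left : P0 ≤ v))
      have hunw : u ≠ w := fun h => hnle (h ▸ (hP0def ▸ inf_le_right : P0 ≤ w))
      have hd1 : finrank F ↥(u ⊓ v) = 1 := inf_finrank_one h2 hv hunv hiv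
      have hd2 : finrank F ↥(u ⊓ w) = 1 := inf_finrank_one h2 hw hunw hiw
      rw [Finset.mem_product]
      constructor
      · rw [mem_erase, mem_filter]
        exact ⟨fun h => hnle (h ▸ inf_le_left), mem_univ _, inf_le_right, hd1⟩
      · rw [mem_erase, mem_filter]
        exact ⟨fun h => hnle (h ▸ inf_le_left), mem_univ _, inf_le_right, hd2⟩
    · intro u hu u' hu' heq
      rw [Finset.mem_filter] at hu hu'
      obtain ⟨hus, hnle⟩ := hu
      obtain ⟨hus', hnle'⟩ := hu'
      rw [hs, mem_filter] at hus hus'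
      obtain ⟨-, hu2, hiv, hiw⟩ := hus
      obtain ⟨-, hu2', hiv', hiw'⟩ := hus'
      have hunv : u ≠ v := fun h => hnle (h ▸ (hP0def ▸ inf_le_left : P0 ≤ v))
      have hunw : u ≠ w := fun h => hnle (h ▸ (hP0def ▸ inf_le_right : P0 ≤ w))
      have hd1 : finrank F ↥(u ⊓ v) = 1 := inf_finrank_one hu2 hv hunv hiv
      have hd2 : finrank F ↥(u ⊓ w) = 1 := inf_finrank_one hu2 hw hunw hiw
      have hPQ : (u ⊓ v) ≠ (u ⊓ w) := by
        intro h
        have : u ⊓ v ≤ P0 := hP0def ▸ le_inf inf_le_right (h ▸ inf_le_right)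
        exact hnle ((point_eq_of_le hd1 hP0 this) ▸ inf_le_left)
      have hsup : finrank F ↥((u ⊓ v) ⊔ (u ⊓ w)) = 2 := sup_points_finrank hd1 hd2 hPQ
      have he1 : (u ⊓ v) ⊔ (u ⊓ w) = u :=
        plane_eq_of_le hsup hu2 (sup_le inf_le_left inf_le_left)
      have heq1 : u ⊓ v = u' ⊓ v := congrArg Prod.fst heq
      have heq2 : u ⊓ w = u' ⊓ w := congrArg Prod.snd heq
      have he2 : (u ⊓ v) ⊔ (u ⊓ w) = u' := by
        rw [heq1, heq2]
        exact plane_eq_of_le (by rw [← heq1, ← heq2]; exact hsup) hu2'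
          (sup_le inf_le_left inf_le_left)
      rw [← he1, he2]
    · rintro ⟨P, Q⟩ hPQ
      rw [Finset.mem_product, mem_erase, mem_erase, mem_filter, mem_filter] at hPQ
      obtain ⟨⟨hPn, -, hPv, hP1⟩, hQn, -, hQw, hQ1⟩ := hPQ
      have hPneQ : P ≠ Q := by
        intro h
        exact hPn (point_eq_of_le hP1 hP0 (hP0def ▸ le_inf hPv (h ▸ hQw)))
      have hu2 : finrank F ↥(P ⊔ Q) = 2 := sup_points_finrank hP1 hQ1 hPneQ
      have huv : P ⊔ Q ≠ v := by
        intro h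
        exact point_ne_bot hQ1 (le_bot_iff.mp (by
          rw [← points_inf_bot hQ1 hP0 hQn]
          exact le_inf (le_refl Q) (hP0def ▸ le_inf (h ▸ le_sup_right) hQw)))
      have huw : P ⊔ Q ≠ w := by
        intro h
        exact point_ne_bot hP1 (le_bot_iff.mp (by
          rw [← points_inf_bot hP1 hP0 hPn]
          exact le_inf (le_refl P) (hP0def ▸ le_inf hPv (h ▸ le_sup_left))))
      have hnle : ¬ P0 ≤ P ⊔ Q := by
        intro hle
        have hsupP : finrank F ↥(P0 ⊔ P) = 2 := sup_points_finrank hP0 hP1 (Ne.symm hPn)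
        have : P0 ⊔ P = P ⊔ Q := plane_eq_of_le hsupP hu2 (sup_le hle le_sup_left)
        have hveq : P ⊔ Q = v := by
          rw [← this]
          exact plane_eq_of_le hsupP hv (sup_le (hP0def ▸ inf_le_left) hPv)
        exact huv hveq
      have hiv : (P ⊔ Q) ⊓ v ≠ ⊥ := fun h =>
        point_ne_bot hP1 (le_bot_iff.mp (h ▸ le_inf le_sup_left hPv))
      have hiw : (P ⊔ Q) ⊓ w ≠ ⊥ := fun h =>
        point_ne_bot hQ1 (le_bot_iff.mp (h ▸ le_inf le_sup_right hQw))
      refine ⟨P ⊔ Q, ?_, ?_⟩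
      · rw [Finset.mem_filter, hs, mem_filter]
        exact ⟨⟨mem_univ _, hu2, hiv, hiw⟩, hnle⟩
      · have hd1 : finrank F ↥((P ⊔ Q) ⊓ v) = 1 := inf_finrank_one hu2 hv huv hiv
        have hd2 : finrank F ↥((P ⊔ Q) ⊓ w) = 1 := inf_finrank_one hu2 hw huw hiw
        have e1 : (P ⊔ Q) ⊓ v = P := (point_eq_of_le hP1 hd1 (le_inf le_sup_left hPv)).symm
        have e2 : (P ⊔ Q) ⊓ w = Q := (point_eq_of_le hQ1 hd2 (le_inf le_sup_right hQw)).symm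
        rw [e1, e2]
  rw [← hsplit, h1, h2, count_lines_through P0 hP0, Finset.card_product,
    Finset.card_erase_of_mem (by
      rw [mem_filter]; exact ⟨mem_univ _, hP0def ▸ inf_le_left, hP0⟩),
    Finset.card_erase_of_mem (by
      rw [mem_filter]; exact ⟨mem_univ _, hP0def ▸ inf_le_right, hP0⟩),
    count_points v hv, count_points w hw]
  simp
  rfl


lemma count_skew (v w : Submodule F V) (hv : finrank F v = 2) (hw : finrank F w = 2)
    (hmeet : v ⊓ w = ⊥) :
    (univ.filter fun u : Submodule F V => finrank F u = 2 ∧ u ⊓ v ≠ ⊥ ∧ u ⊓ w ≠ ⊥).card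
      = (Fintype.card F + 1) * (Fintype.card F + 1) := by
  have hvw : v ≠ w := by
    intro h
    rw [h, inf_idem] at hmeet
    rw [hmeet, finrank_bot] at hw
    omega
  have hcard : ((univ.filter fun P : Submodule F V => P ≤ v ∧ finrank F P = 1) ×ˢ
      (univ.filter fun Q : Submodule F V => Q ≤ w ∧ finrank F Q = 1)).card
      = (Fintype.card F + 1) * (Fintype.card F + 1) := by
    rw [Finset.card_product, count_points v hv, count_points w hw]
  rw [← hcard]
  apply Finset.card_bij (fun u _ => (u ⊓ v, u ⊓ w))
  · intro u hu
    rw [mem_filter] at hu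
    obtain ⟨-, h2, hiv, hiw⟩ := hu
    have hunv : u ≠ v := fun h => hiw (by rw [h, hmeet])
    have hunw : u ≠ w := fun h => hiv (by rw [h, inf_comm, hmeet])
    rw [Finset.mem_product, mem_filter, mem_filter]
    exact ⟨⟨mem_univ _, inf_le_right, inf_finrank_one h2 hv hunv hiv⟩,
      ⟨mem_univ _, inf_le_right, inf_finrank_one h2 hw hunw hiw⟩⟩
  · intro u hu u' hu' heq
    rw [mem_filter] at hu hu'
    obtain ⟨-, h2, hiv, hiw⟩ := hu
    obtain ⟨-, h2', hiv', hiw'⟩ := hu'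
    have hunv : u ≠ v := fun h => hiw (by rw [h, hmeet])
    have hunw : u ≠ w := fun h => hiv (by rw [h, inf_comm, hmeet])
    have hd1 := inf_finrank_one h2 hv hunv hiv
    have hd2 := inf_finrank_one h2 hw hunw hiw
    have hPQ : u ⊓ v ≠ u ⊓ w := by
      intro h
      have hle : u ⊓ v ≤ v ⊓ w := le_inf inf_le_right (h ▸ inf_le_right)
      rw [hmeet, le_bot_iff] at hle
      exact point_ne_bot hd1 hle
    have hsup : finrank F ↥((u ⊓ v) ⊔ (u ⊓ w)) = 2 := sup_points_finrank hd1 hd2 hPQ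
    have he1 : (u ⊓ v) ⊔ (u ⊓ w) = u :=
      plane_eq_of_le hsup h2 (sup_le inf_le_left inf_le_left)
    have heq1 : u ⊓ v = u' ⊓ v := congrArg Prod.fst heq
    have heq2 : u ⊓ w = u' ⊓ w := congrArg Prod.snd heq
    have he2 : (u ⊓ v) ⊔ (u ⊓ w) = u' := by
      rw [heq1, heq2]
      exact plane_eq_of_le (by rw [← heq1, ← heq2]; exact hsup) h2'
        (sup_le inf_le_left inf_le_left)
    rw [← he1, he2]
  · rintro ⟨P, Q⟩ hPQ
    rw [Finset.mem_product, mem_filter, mem_filter] at hPQ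
    obtain ⟨⟨-, hPv, hP1⟩, -, hQw, hQ1⟩ := hPQ
    have hPneQ : P ≠ Q := by
      intro h
      have hle : P ≤ v ⊓ w := le_inf hPv (h ▸ hQw)
      rw [hmeet, le_bot_iff] at hle
      exact point_ne_bot hP1 hle
    have hu2 : finrank F ↥(P ⊔ Q) = 2 := sup_points_finrank hP1 hQ1 hPneQ
    have huv : P ⊔ Q ≠ v := by
      intro h
      have hle : Q ≤ v ⊓ w := le_inf (h ▸ le_sup_right) hQw
      rw [hmeet, le_bot_iff] at hle
      exact point_ne_bot hQ1 hle
    have huw : P ⊔ Q ≠ w := by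
      intro h
      have hle : P ≤ v ⊓ w := le_inf hPv (h ▸ le_sup_left)
      rw [hmeet, le_bot_iff] at hle
      exact point_ne_bot hP1 hle
    have hiv : (P ⊔ Q) ⊓ v ≠ ⊥ := fun h =>
      point_ne_bot hP1 (le_bot_iff.mp (h ▸ le_inf le_sup_left hPv))
    have hiw : (P ⊔ Q) ⊓ w ≠ ⊥ := fun h =>
      point_ne_bot hQ1 (le_bot_iff.mp (h ▸ le_inf le_sup_right hQw))
    refine ⟨P ⊔ Q, by rw [mem_filter]; exact ⟨mem_univ _, hu2, hiv, hiw⟩, ?_⟩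
    have hd1 := inf_finrank_one hu2 hv huv hiv
    have hd2 := inf_finrank_one hu2 hw huw hiw
    have e1 : (P ⊔ Q) ⊓ v = P := (point_eq_of_le hP1 hd1 (le_inf le_sup_left hPv)).symm
    have e2 : (P ⊔ Q) ⊓ w = Q := (point_eq_of_le hQ1 hd2 (le_inf le_sup_right hQw)).symm
    rw [e1, e2]

lemma plane_ne_bot {v : Submodule F V} (hv : finrank F v = 2) : v ≠ ⊥ := by
  intro h
  rw [h, finrank_bot] at hv
  omega

-- the uniform count mod q
lemma count_meet_pair (v w : Submodule F V) (hv : finrank F v = 2) (hw : finrank F w = 2)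
    (hn : 2 ≤ finrank F V) :
    ∃ c : ℕ, (univ.filter fun u : Submodule F V =>
        finrank F u = 2 ∧ u ⊓ v ≠ ⊥ ∧ u ⊓ w ≠ ⊥).card = 1 + Fintype.card F * c := by
  set q := Fintype.card F
  set n := finrank F V
  have hg : gauss1 q (n - 1) = q * gauss1 q (n - 2) + 1 := by
    have h : n - 1 = (n - 2) + 1 := by omega
    rw [h, gauss1_succ]
  rcases eq_or_ne v w with rfl | hne
  · refine ⟨(q + 1) * gauss1 q (n - 2), ?_⟩
    have hset : (univ.filter fun u : Submodule F V => finrank F u = 2 ∧ u ⊓ v ≠ ⊥ ∧ u ⊓ v ≠ ⊥)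
        = insert v (univ.filter fun u : Submodule F V => finrank F u = 2 ∧ u ≠ v ∧ u ⊓ v ≠ ⊥) := by
      ext u
      simp only [mem_filter, mem_univ, true_and, mem_insert]
      constructor
      · rintro ⟨h2, hb, -⟩
        rcases eq_or_ne u v with rfl | hne
        · exact Or.inl rfl
        · exact Or.inr ⟨h2, hne, hb⟩
      · rintro (rfl | ⟨h2, hne, hb⟩)
        · exact ⟨hv, by simpa [inf_idem] using plane_ne_bot hv, by simpa [inf_idem] using plane_ne_bot hv⟩
        · exact ⟨h2, hb, hb⟩
    rw [hset, Finset.card_insert_of_notMem (by simp), count_degree v hv hn]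
    ring
  · rcases eq_or_ne (v ⊓ w) ⊥ with hb | hb
    · refine ⟨q + 2, ?_⟩
      rw [count_skew v w hv hw hb]
      ring
    · refine ⟨gauss1 q (n - 2) + q, ?_⟩
      rw [count_adjacent v w hv hw hne hb, hg]
      ring

lemma count_meet_pair_ncard (v w : Submodule F V) (hv : finrank F v = 2) (hw : finrank F w = 2)
    (hn : 2 ≤ finrank F V) :
    ∃ c : ℕ, Nat.card {u : Submodule F V // finrank F u = 2 ∧ u ⊓ v ≠ ⊥ ∧ u ⊓ w ≠ ⊥}
      = 1 + Fintype.card F * c := by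
  obtain ⟨c, hc⟩ := count_meet_pair v w hv hw hn
  exact ⟨c, by rw [glue]; exact hc⟩

lemma count_degree_ncard (v : Submodule F V) (hv : finrank F v = 2) (hn : 2 ≤ finrank F V) :
    Nat.card {u : Submodule F V // finrank F u = 2 ∧ u ≠ v ∧ u ⊓ v ≠ ⊥}
      = (Fintype.card F + 1) * (Fintype.card F * gauss1 (Fintype.card F) (finrank F V - 2)) := by
  rw [glue]
  exact count_degree v hv hn

end Geom

-- bridge between subtype filters and submodule filters
lemma card_filter_two {F : Type} [Field F] {V : Type} [AddCommGroup V] [Module F V]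
    [Fintype {W : Submodule F V // Module.finrank F W = 2}] [Fintype (Submodule F V)]
    (Pred : Submodule F V → Prop) :
    (Finset.univ.filter fun u : {W : Submodule F V // Module.finrank F W = 2} => Pred u.1).card
      = (Finset.univ.filter fun u : Submodule F V => Module.finrank F u = 2 ∧ Pred u).card := by
  apply Finset.card_bij (fun u _ => u.1)
  · intro u hu
    rw [Finset.mem_filter] at hu ⊢
    exact ⟨Finset.mem_univ _, u.2, hu.2⟩
  · intro u _ u' _ h
    exact Subtype.ext h
  · intro b hb
    rw [Finset.mem_filter] at hb
    exact ⟨⟨b, hb.2.1⟩, by rw [Finset.mem_filter]; exact ⟨Finset.mem_univ _, hb.2.2⟩, rfl⟩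

/-- The order of the critical group of the Grassmann graph on `2`-dimensional subspaces of
`F_q^n`, `q = p^t`, is coprime to `p`: the Laplacian has no elementary divisors divisible
by `p`. -/
theorem critical_group_grassmann_coprime_p
    (p t n : ℕ) (hp : p.Prime) (ht : 1 ≤ t) (hn : 4 ≤ n)
    (q : ℕ) (hq : q = p ^ t)
    (F : Type) [Field F] [Fintype F] (hF : Fintype.card F = q)
    [Fintype (TwoSubspaces F n)]
    (A' : Matrix (TwoSubspaces F n) (TwoSubspaces F n) ℤ)
    (hA' : ∀ v w : TwoSubspaces F n,
      A' v w = if v ≠ w ∧ v.1 ⊓ w.1 ≠ ⊥ then 1 else 0)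
    (L' : Matrix (TwoSubspaces F n) (TwoSubspaces F n) ℤ)
    (hL' : L' = ((q * (q + 1) * gauss1 q (n - 2) : ℕ) : ℤ) • (1 : Matrix _ _ ℤ) - A') :
    Nat.Coprime p (Nat.card ↥(AddCommGroup.torsion (cokernel L'))) := by
  classical
  haveI : Fact p.Prime := ⟨hp⟩
  haveI : Finite (Submodule F (Fin n → F)) := Finite.of_injective _ SetLike.coe_injective
  haveI : Fintype (Submodule F (Fin n → F)) := Fintype.ofFinite _
  have hfr : Module.finrank F (Fin n → F) = n := Module.finrank_fin_fun F
  have hn2 : 2 ≤ Module.finrank F (Fin n → F) := by omega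
  have hq0 : (q : ZMod p) = 0 := by
    rw [hq]
    push_cast
    rw [ZMod.natCast_self]
    exact zero_pow (by omega)
  have hk'0 : (((q * (q + 1) * gauss1 q (n - 2) : ℕ) : ℤ) : ZMod p) = 0 := by
    push_cast
    rw [hq0]
    ring
  -- the matrix B over ZMod p
  set B : Matrix (TwoSubspaces F n) (TwoSubspaces F n) (ZMod p) :=
    Matrix.of fun v w => if v.1 ⊓ w.1 = ⊥ then 0 else 1 with hB
  have hBsymm : ∀ v w : TwoSubspaces F n, B v w = B w v := by
    intro v w
    simp only [hB, Matrix.of_apply]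
    rw [inf_comm]
  -- B * B = all-ones
  have hB2 : ∀ v w : TwoSubspaces F n, (B * B) v w = 1 := by
    intro v w
    rw [Matrix.mul_apply]
    have hterm : ∀ u : TwoSubspaces F n, B v u * B u w
        = if (u.1 ⊓ v.1 ≠ ⊥ ∧ u.1 ⊓ w.1 ≠ ⊥) then 1 else 0 := by
      intro u
      rw [hBsymm v u]
      simp only [hB, Matrix.of_apply]
      by_cases h1 : u.1 ⊓ v.1 = ⊥ <;> by_cases h2 : u.1 ⊓ w.1 = ⊥ <;> simp [h1, h2]
    rw [Finset.sum_congr rfl (fun u _ => hterm u), Finset.sum_boole, ← glue,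
      natcard_two (fun u => u ⊓ v.1 ≠ ⊥ ∧ u ⊓ w.1 ≠ ⊥)]
    obtain ⟨c, hc⟩ := count_meet_pair_ncard v.1 w.1 v.2 w.2 hn2
    rw [hc, hF]
    push_cast
    rw [hq0]
    ring
  -- cast of L' entries
  have hLB : ∀ v w : TwoSubspaces F n, ((L' v w : ℤ) : ZMod p)
      = ((1 : Matrix (TwoSubspaces F n) (TwoSubspaces F n) (ZMod p)) - B) v w := by
    intro v w
    rw [hL']
    simp only [Matrix.sub_apply, Matrix.smul_apply, Matrix.one_apply, hA', hB, Matrix.of_apply,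
      smul_eq_mul]
    rcases eq_or_ne v w with rfl | hne
    · have hvb : v.1 ⊓ v.1 ≠ ⊥ := by
        rw [inf_idem]
        exact plane_ne_bot v.2
      simp only [if_pos rfl, if_neg (by simp : ¬(v ≠ v ∧ v.1 ⊓ v.1 ≠ ⊥)), if_neg hvb]
      push_cast at hk'0 ⊢
      rw [hk'0]
      ring
    · rcases em (v.1 ⊓ w.1 = ⊥) with hb | hb
      · simp only [if_neg hne, if_pos hb, if_neg (by tauto : ¬(v ≠ w ∧ v.1 ⊓ w.1 ≠ ⊥))]
        push_cast
        ring
      · simp only [if_neg hne, if_neg hb, if_pos (⟨hne, hb⟩ : v ≠ w ∧ v.1 ⊓ w.1 ≠ ⊥)]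
        have hne' : ¬ v = w := hne
        push_cast at hk'0 ⊢
        simp [hne', hk'0]
  -- kernel of 1 - B is constants
  have hker : ∀ y : TwoSubspaces F n → ZMod p,
      ((1 : Matrix (TwoSubspaces F n) (TwoSubspaces F n) (ZMod p)) - B).mulVec y = 0 →
      ∃ c : ZMod p, y = fun _ => c := by
    intro y hy
    rw [Matrix.sub_mulVec, Matrix.one_mulVec, sub_eq_zero] at hy
    refine ⟨∑ u, y u, funext fun v => ?_⟩
    have h1 : y v = ((B * B).mulVec y) v := by
      rw [← Matrix.mulVec_mulVec, ← hy, ← hy]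
    rw [h1]
    show ∑ u, (B * B) v u * y u = _
    rw [Finset.sum_congr rfl (fun u _ => by rw [hB2 v u, one_mul])]
  -- row sums of L' are 0
  have hrow : L'.mulVec (fun _ => (1 : ℤ)) = 0 := by
    funext v
    show ∑ u, L' v u * 1 = 0
    simp only [mul_one]
    rw [hL']
    simp only [Matrix.sub_apply, Matrix.smul_apply, Matrix.one_apply, smul_eq_mul]
    rw [Finset.sum_sub_distrib]
    have h1 : ∑ u : TwoSubspaces F n,
        ((q * (q + 1) * gauss1 q (n - 2) : ℕ) : ℤ) * (if v = u then 1 else 0)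
        = ((q * (q + 1) * gauss1 q (n - 2) : ℕ) : ℤ) := by
      rw [Finset.sum_eq_single v]
      · simp
      · intro b _ hb
        simp [(Ne.symm hb : ¬ v = b)]
      · simp
    have hterm : ∀ u : TwoSubspaces F n,
        A' v u = if (u.1 ≠ v.1 ∧ u.1 ⊓ v.1 ≠ ⊥) then 1 else 0 := by
      intro u
      rw [hA']
      congr 1
      rw [eq_iff_iff]
      constructor
      · rintro ⟨h1', h2⟩
        exact ⟨fun h => h1' (Subtype.ext h).symm, by rwa [inf_comm]⟩
      · rintro ⟨h1', h2⟩
        exact ⟨fun h => h1' (congrArg Subtype.val h).symm, by rwa [inf_comm]⟩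
    have h2 : ∑ u : TwoSubspaces F n, A' v u = ((q * (q + 1) * gauss1 q (n - 2) : ℕ) : ℤ) := by
      rw [Finset.sum_congr rfl (fun u _ => hterm u), Finset.sum_boole, ← glue,
        natcard_two (fun u => u ≠ v.1 ∧ u ⊓ v.1 ≠ ⊥),
        count_degree_ncard v.1 v.2 hn2, hF, hfr]
      push_cast
      ring
    rw [h1, h2, sub_self]
  -- main lemma: no p-torsion
  have hmain : ∀ x : TwoSubspaces F n → ℤ,
      (∃ y, L'.mulVec y = (p : ℤ) • x) → ∃ z, L'.mulVec z = x := by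
    rintro x ⟨y, hy⟩
    have hymod : ((1 : Matrix (TwoSubspaces F n) (TwoSubspaces F n) (ZMod p)) - B).mulVec
        (fun v => ((y v : ℤ) : ZMod p)) = 0 := by
      funext v
      show ∑ u, ((1 : Matrix (TwoSubspaces F n) (TwoSubspaces F n) (ZMod p)) - B) v u
          * ((y u : ℤ) : ZMod p) = 0
      rw [Finset.sum_congr rfl (fun u _ => by rw [← hLB v u])]
      have hcast : ∑ u, ((L' v u : ℤ) : ZMod p) * ((y u : ℤ) : ZMod p)
          = (((L'.mulVec y) v : ℤ) : ZMod p) := by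
        show _ = ((∑ u, L' v u * y u : ℤ) : ZMod p)
        push_cast
        rfl
      rw [hcast, hy]
      show ((((p : ℤ) • x) v : ℤ) : ZMod p) = 0
      simp only [Pi.smul_apply, smul_eq_mul]
      push_cast
      simp [ZMod.natCast_self]
    obtain ⟨c, hcy⟩ := hker _ hymod
    obtain ⟨c₀, hc₀⟩ := ZMod.intCast_surjective (n := p) c
    have hdvd : ∀ v, (p : ℤ) ∣ (y v - c₀) := by
      intro v
      rw [← ZMod.intCast_zmod_eq_zero_iff_dvd]
      push_cast
      have h := congrFun hcy v
      rw [h, hc₀, sub_self]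
    set z : TwoSubspaces F n → ℤ := fun v => (y v - c₀) / p with hzdef
    have hyz : y = (fun _ => c₀) + (p : ℤ) • z := by
      funext v
      have h := Int.mul_ediv_cancel' (hdvd v)
      simp only [Pi.add_apply, Pi.smul_apply, smul_eq_mul, hzdef]
      omega
    have hLy : L'.mulVec y = (p : ℤ) • L'.mulVec z := by
      rw [hyz, Matrix.mulVec_add, Matrix.mulVec_smul]
      have hc1 : (fun (_ : TwoSubspaces F n) => c₀) = c₀ • (fun _ => (1 : ℤ)) := by
        funext u
        simp
      rw [hc1, Matrix.mulVec_smul, hrow, smul_zero, zero_add]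
    refine ⟨z, funext fun v => ?_⟩
    have hpx : (p : ℤ) • L'.mulVec z = (p : ℤ) • x := by rw [← hLy, hy]
    have h := congrFun hpx v
    simp only [Pi.smul_apply, smul_eq_mul] at h
    exact mul_left_cancel₀ (by exact_mod_cast hp.ne_zero : (p : ℤ) ≠ 0) h
  -- finiteness of the torsion subgroup
  haveI : Module.Finite ℤ (cokernel L') := inferInstance
  haveI : Module.Finite ℤ ↥(Submodule.torsion ℤ (cokernel L')) :=
    Module.Finite.iff_fg.mpr (IsNoetherian.noetherian _)
  have hTfin : Finite ↥(Submodule.torsion ℤ (cokernel L')) :=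
    Module.finite_of_fg_torsion _ (Submodule.torsion_isTorsion (R := ℤ))
  haveI hfin : Finite ↥(AddCommGroup.torsion (cokernel L')) := by
    rw [← Submodule.torsion_int]
    exact hTfin
  -- endgame
  rw [Nat.Prime.coprime_iff_not_dvd hp]
  intro hdvd
  obtain ⟨g, hg⟩ := exists_prime_addOrderOf_dvd_card' p hdvd
  have hg0 : (g : cokernel L') ≠ 0 := by
    intro h0
    have hgz : g = 0 := Subtype.ext h0
    rw [hgz, addOrderOf_zero] at hg
    exact absurd hg.symm hp.one_lt.ne'
  have h1 : p • g = 0 := by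
    rw [← hg]
    exact addOrderOf_nsmul_eq_zero g
  have hpg : p • (g : cokernel L') = 0 := by
    have h2 := congrArg (Subtype.val) h1
    simpa using h2
  obtain ⟨x, hx⟩ := Submodule.Quotient.mk_surjective _ (g : cokernel L')
  have hmem : ((p : ℤ) • x) ∈ LinearMap.range (Matrix.mulVecLin L') := by
    rw [← Submodule.Quotient.mk_eq_zero, Submodule.Quotient.mk_smul, hx]
    rw [natCast_zsmul]
    exact hpg
  obtain ⟨y, hy⟩ := hmem
  obtain ⟨z, hz⟩ := hmain x ⟨y, by rw [← hy]; rfl⟩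
  apply hg0
  rw [← hx, Submodule.Quotient.mk_eq_zero]
  exact ⟨z, by rw [Matrix.mulVecLin_apply, hz]⟩
end
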